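/- Let $A$ be a $p\times p$ positive semidefinite matrix such that $\mu(A) := \min_{y \in [0,\infty)^p \setminus \{0\}} \frac{y^\top A y}{y^\top y} > 0$. If $D$ is a diagonal matrix with positive entries satisfying $DADe = e$ (where $e = (1,\ldots,1)^\top$), then $\operatorname{tr}(D^2) \leq p/\mu(A)$. -/

import Mathlib

/-- The minimum of the Rayleigh quotient of `A` over nonzero nonnegative vectors. -/
noncomputable def muNonneg {p : ℕ} (A : Matrix (Fin p) (Fin p) ℝ) : ℝ :=
  sInf {r : ℝ | ∃ y : Fin p → ℝ, (∀ i, 0 ≤ y i) ∧ y ≠ 0 ∧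
    r = (∑ i, ∑ j, y i * A i j * y j) / (∑ i, (y i) ^ 2)}

theorem stmt_5 {p : ℕ} (hp : 0 < p) (A : Matrix (Fin p) (Fin p) ℝ)
    (hA : A.PosSemidef) (hμ : 0 < muNonneg A)
    (d : Fin p → ℝ) (hd : ∀ i, 0 < d i)
    (hscal : ∀ i, d i * ∑ j, A i j * d j = 1) :
    ∑ i, (d i) ^ 2 ≤ p / muNonneg A := by
  have hquad : ∀ y : Fin p → ℝ, 0 ≤ ∑ i, ∑ j, y i * A i j * y j := by
    intro y
    have h := hA.dotProduct_mulVec_nonneg y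
    have : dotProduct (star y) (A.mulVec y) = ∑ i, ∑ j, y i * A i j * y j := by
      simp [dotProduct, Matrix.mulVec, Finset.mul_sum, mul_assoc]
    rwa [this] at h
  have hbdd : BddBelow {r : ℝ | ∃ y : Fin p → ℝ, (∀ i, 0 ≤ y i) ∧ y ≠ 0 ∧
      r = (∑ i, ∑ j, y i * A i j * y j) / (∑ i, (y i) ^ 2)} := by
    refine ⟨0, ?_⟩
    rintro r ⟨y, _, _, rfl⟩
    exact div_nonneg (hquad y) (Finset.sum_nonneg fun i _ => sq_nonneg _)
  have hsum : ∑ i, ∑ j, d i * A i j * d j = (p : ℝ) := by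
    have : ∀ i, ∑ j, d i * A i j * d j = 1 := by
      intro i
      rw [← hscal i, Finset.mul_sum]
      simp [mul_assoc]
    simp [this]
  have hden : 0 < ∑ i, (d i) ^ 2 := by
    apply Finset.sum_pos (fun i _ => pow_pos (hd i) 2)
    exact ⟨⟨0, hp⟩, Finset.mem_univ _⟩
  have hmem : (p : ℝ) / (∑ i, (d i) ^ 2) ∈ {r : ℝ | ∃ y : Fin p → ℝ, (∀ i, 0 ≤ y i) ∧ y ≠ 0 ∧
      r = (∑ i, ∑ j, y i * A i j * y j) / (∑ i, (y i) ^ 2)} := by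
    refine ⟨d, fun i => (hd i).le, ?_, by rw [hsum]⟩
    intro h
    exact absurd (congrFun h ⟨0, hp⟩) (ne_of_gt (hd ⟨0, hp⟩))
  have hle : muNonneg A ≤ (p : ℝ) / (∑ i, (d i) ^ 2) := csInf_le hbdd hmem
  rw [le_div_iff₀ hden] at hle
  rw [le_div_iff₀ hμ]
  linarith [hle]
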